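/- Fix b ∈ (0,1], β ∈ ℝ, r ≥ 0, and a function α : ℤ∖{0} → ℝ with Σ_{y ∈ ℤ∖{0}} |y|^r·|α_y| < ∞, and define ν̂(y) := (α_y − (1−b)·α_{−y})·β/((2−b)·b) for y ∈ ℤ∖{0}. Then (2 − b)·Σ_{y ∈ ℤ∖{0}} |y|^r·ν̂(y) = β·Σ_{y ∈ ℤ∖{0}} |y|^r·α_y; in particular, this quantity does not depend on b. -/

import Mathlib

/-- With `ν̂(y) = (α_y − (1−b)·α_{−y})·β/((2−b)·b)` for non-zero integers
`y` (encoded by a function `α : ℤ → ℝ` vanishing at `0`), one has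
`(2 − b)·Σ_y |y|^r·ν̂(y) = β·Σ_y |y|^r·α_y`; in particular this quantity does not depend on
the permanence parameter `b`. -/
theorem levy_measure_estimator_moments_independent_of_b
    (b β r : ℝ) (hb : b ∈ Set.Ioc (0:ℝ) 1) (hr : 0 ≤ r)
    (α : ℤ → ℝ) (hα0 : α 0 = 0)
    (hsum : Summable (fun y : ℤ => |(y : ℝ)| ^ r * |α y|))
    (ν : ℤ → ℝ)
    (hν : ∀ y : ℤ, ν y = (α y - (1 - b) * α (-y)) * β / ((2 - b) * b)) :
    (2 - b) * ∑' y : ℤ, |(y : ℝ)| ^ r * ν y = β * ∑' y : ℤ, |(y : ℝ)| ^ r * α y := by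
  obtain ⟨hb0, hb1⟩ := hb
  have h2b : (2 : ℝ) - b ≠ 0 := by linarith
  have hbne : b ≠ 0 := ne_of_gt hb0
  -- summability of f y = |y|^r * α y
  have hs : Summable (fun y : ℤ => |(y : ℝ)| ^ r * α y) := by
    apply Summable.of_abs
    refine hsum.congr (fun y => ?_)
    rw [abs_mul, abs_of_nonneg (by positivity : (0:ℝ) ≤ |(y:ℝ)| ^ r)]
  -- summability of g y = |y|^r * α (-y)
  have hs' : Summable (fun y : ℤ => |(y : ℝ)| ^ r * α (-y)) := by
    have := hs.comp_injective (neg_injective (G := ℤ))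
    refine this.congr (fun y => ?_)
    simp
  -- reindexing identity
  have hre : ∑' y : ℤ, |(y : ℝ)| ^ r * α (-y) = ∑' y : ℤ, |(y : ℝ)| ^ r * α y := by
    rw [← (Equiv.neg ℤ).tsum_eq (fun y : ℤ => |(y : ℝ)| ^ r * α y)]
    apply tsum_congr
    intro y
    simp
  have key : (fun y : ℤ => |(y : ℝ)| ^ r * ν y)
      = fun y : ℤ => (β / ((2 - b) * b)) *
        (|(y : ℝ)| ^ r * α y - (1 - b) * (|(y : ℝ)| ^ r * α (-y))) := by
    funext y
    rw [hν y]
    ring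
  rw [key, tsum_mul_left, hs.tsum_sub (hs'.mul_left _), tsum_mul_left, hre]
  field_simp
  ring
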